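/- Let c₁ ≥ 0 and c₂ > 0 with c₁ + c₂ < 1, let k, d be positive real numbers, and set β = k/(k+d). Then c₁ + c₂ − β·c₁²/(c₁+c₂) < 1 − β holds if and only if k/d < (c₁ + c₂ − (c₁+c₂)²) / (c₂·(2c₁ + c₂)). -/

import Mathlib

/-- phase transition between pre-trained and zero initialization
(general task covariance setting). -/
theorem stmt19 (c1 c2 : ℝ) (hc1 : 0 ≤ c1) (hc2 : 0 < c2) (hsum : c1 + c2 < 1)
    (k d : ℝ) (hk : 0 < k) (hd : 0 < d) (b : ℝ) (hb : b = k / (k + d)) :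
    (c1 + c2 - b * c1 ^ 2 / (c1 + c2) < 1 - b) ↔
      k / d < (c1 + c2 - (c1 + c2) ^ 2) / (c2 * (2 * c1 + c2)) := by
  subst hb
  have hs : 0 < c1 + c2 := by linarith
  have hkd : 0 < k + d := by linarith
  have hden : 0 < c2 * (2 * c1 + c2) := by positivity
  have e1 : c1 + c2 - k / (k + d) * c1 ^ 2 / (c1 + c2)
      = ((c1 + c2) ^ 2 * (k + d) - k * c1 ^ 2) / ((k + d) * (c1 + c2)) := by
    field_simp
  have e2 : 1 - k / (k + d) = d / (k + d) := by field_simp; ring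
  rw [e1, e2, div_lt_div_iff₀ (by positivity) hkd, div_lt_div_iff₀ hd hden]
  constructor <;> intro h <;> nlinarith [h]
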